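/- For every real a > 0 and integer n ≥ 1, the generalized exponential integral satisfies (a + n)^{-1} < e^a · E_n(a) ≤ (a + n - 1)^{-1}, where E_n(a) = ∫_1^∞ e^{-a t} t^{-n} dt. -/

import Mathlib

open Real MeasureTheory Set
open Filter

noncomputable def Egen (n : ℕ) (a : ℝ) : ℝ :=
  ∫ t in Set.Ioi (1:ℝ), Real.exp (-a * t) * t⁻¹ ^ n

lemma egen_integrable {a : ℝ} (ha : 0 < a) (k : ℕ) :
    IntegrableOn (fun t : ℝ => Real.exp (-a * t) * t⁻¹ ^ k) (Ioi 1) := by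
  apply Integrable.mono' (exp_neg_integrableOn_Ioi 1 ha)
  · apply ContinuousOn.aestronglyMeasurable _ measurableSet_Ioi
    apply ContinuousOn.mul (Continuous.continuousOn (by continuity))
    exact (ContinuousOn.inv₀ continuousOn_id (fun x hx => by
      simp only [id_eq]; have : (1:ℝ) < x := hx; exact ne_of_gt (by linarith))).pow k
  · filter_upwards [ae_restrict_mem measurableSet_Ioi] with t ht
    have h1 : (1:ℝ) < t := ht
    have hinv : t⁻¹ ≤ 1 := by
      rw [inv_le_one_iff₀]; right; linarith
    have hinv0 : 0 ≤ t⁻¹ := by positivity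
    have : t⁻¹ ^ k ≤ 1 := pow_le_one₀ hinv0 hinv
    rw [Real.norm_eq_abs, abs_mul, abs_of_nonneg (Real.exp_pos _).le,
      abs_of_nonneg (by positivity)]
    nlinarith [Real.exp_pos (-a * t)]

theorem stmt_3 (a : ℝ) (ha : 0 < a) (n : ℕ) (hn : 1 ≤ n) :
    (a + n)⁻¹ < Real.exp a * Egen n a ∧
    Real.exp a * Egen n a ≤ (a + n - 1)⁻¹ := by
  have hn1 : (1:ℝ) ≤ (n:ℝ) := by exact_mod_cast hn
  have han : 0 < a + n := by linarith
  have han1 : 0 < a + n - 1 := by linarith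
  have hIn := egen_integrable ha n
  constructor
  · -- lower bound
    -- comparand L t = exp n * exp (-(a+n) t)
    set L : ℝ → ℝ := fun t => Real.exp n * Real.exp (-(a + n) * t) with hL
    have hLint : IntegrableOn L (Ioi 1) :=
      (exp_neg_integrableOn_Ioi 1 han).const_mul _
    have hLval : ∫ t in Ioi (1:ℝ), L t = Real.exp (-a) * (a + n)⁻¹ := by
      rw [integral_const_mul]
      have hd : ∀ x ∈ Ici (1:ℝ), HasDerivAt (fun t => -(a+n)⁻¹ * Real.exp (-(a+n)*t))
          (Real.exp (-(a+n)*x)) x := by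
        intro x _
        have h1 : HasDerivAt (fun t : ℝ => -(a+n)*t) (-(a+n)) x := by
          simpa using (hasDerivAt_id x).const_mul (-(a+n))
        have this : HasDerivAt (fun t => -(a+n)⁻¹ * Real.exp (-(a+n)*t)) _ x := (h1.exp).const_mul (-(a+n)⁻¹)
        convert this using 1
        field_simp
      have htend : Tendsto (fun t => -(a+n)⁻¹ * Real.exp (-(a+n)*t)) atTop (nhds 0) := by
        rw [show (0:ℝ) = -(a+n)⁻¹ * 0 by ring]
        apply Tendsto.const_mul
        apply Real.tendsto_exp_atBot.comp
        apply Tendsto.const_mul_atTop_of_neg (by linarith : -(a+n) < 0) tendsto_id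
      have hint := integral_Ioi_of_hasDerivAt_of_tendsto' hd
        (exp_neg_integrableOn_Ioi 1 han) htend
      rw [hint]
      have he : Real.exp (n:ℝ) * Real.exp (-(a+n)*1) = Real.exp (-a) := by
        rw [← Real.exp_add]; norm_num
      linear_combination (a+n)⁻¹ * he
    have hLform : ∀ t : ℝ, Real.exp (-a*t) * Real.exp (-(t-1)) ^ n = L t := by
      intro t
      simp only [hL, ← Real.exp_nat_mul, ← Real.exp_add]
      congr 1; ring
    -- strict pointwise inequality L t < f t on Ioi 1
    have hptle : ∀ t ∈ Ici (1:ℝ), L t ≤ Real.exp (-a * t) * t⁻¹ ^ n := by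
      intro t ht
      have ht1 : (1:ℝ) ≤ t := ht
      have ht0 : 0 < t := by linarith
      have hexp : t ≤ Real.exp (t - 1) := by
        have := Real.add_one_le_exp (t - 1); linarith
      have hinv : Real.exp (-(t-1)) ≤ t⁻¹ := by
        rw [Real.exp_neg]
        exact inv_anti₀ ht0 hexp
      have hpow : Real.exp (-(t-1)) ^ n ≤ t⁻¹ ^ n :=
        pow_le_pow_left₀ (Real.exp_pos _).le hinv n
      rw [← hLform t]
      exact mul_le_mul_of_nonneg_left hpow (Real.exp_pos _).le
    have hstrict : ∫ t in Ioi (1:ℝ), L t < Egen n a := by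
      have hdiff : 0 < ∫ t in Ioi (1:ℝ), (Real.exp (-a * t) * t⁻¹ ^ n - L t) := by
        have hsub : IntegrableOn (fun t : ℝ => Real.exp (-a * t) * t⁻¹ ^ n - L t) (Ioi 1) :=
          hIn.sub hLint
        have h2 : (0:ℝ) < ∫ t in (1:ℝ)..2, (Real.exp (-a * t) * t⁻¹ ^ n - L t) := by
          apply intervalIntegral.intervalIntegral_pos_of_pos_on
          · rw [intervalIntegrable_iff_integrableOn_Ioc_of_le one_le_two]
            exact hsub.mono Ioc_subset_Ioi_self le_rfl
          · intro x hx
            have hx1 : (1:ℝ) < x := hx.1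
            have hx0 : 0 < x := by linarith
            have hexp : x < Real.exp (x - 1) :=
              lt_of_lt_of_le (by linarith [Real.add_one_lt_exp (show x - 1 ≠ 0 by intro h; linarith)]) le_rfl
            have hinv : Real.exp (-(x-1)) < x⁻¹ := by
              rw [Real.exp_neg]
              exact inv_strictAnti₀ hx0 hexp
            have hpow : Real.exp (-(x-1)) ^ n < x⁻¹ ^ n := by
              apply pow_lt_pow_left₀ hinv (Real.exp_pos _).le
              omega
            rw [← hLform x]
            have := mul_lt_mul_of_pos_left hpow (Real.exp_pos (-a * x))
            linarith
          · norm_num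
        have h3 : ∫ t in (1:ℝ)..2, (Real.exp (-a * t) * t⁻¹ ^ n - L t)
            ≤ ∫ t in Ioi (1:ℝ), (Real.exp (-a * t) * t⁻¹ ^ n - L t) := by
          rw [intervalIntegral.integral_of_le one_le_two]
          apply setIntegral_mono_set hsub
          · filter_upwards [ae_restrict_mem measurableSet_Ioi] with t ht
            have h1t : (1:ℝ) < t := ht
            have := hptle t (le_of_lt h1t)
            simp only [Pi.zero_apply]
            linarith
          · exact HasSubset.Subset.eventuallyLE Ioc_subset_Ioi_self
        linarith
      have := integral_sub hIn hLint
      rw [this] at hdiff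
      unfold Egen
      linarith
    rw [hLval] at hstrict
    have := mul_lt_mul_of_pos_left hstrict (Real.exp_pos a)
    rw [← mul_assoc, ← Real.exp_add] at this
    simpa using this
  · -- upper bound
    set G : ℝ → ℝ := fun t => Real.exp (-a * t) * t⁻¹ ^ (n - 1) with hG
    set G' : ℝ → ℝ := fun t =>
      -(a * (Real.exp (-a * t) * t⁻¹ ^ (n-1)) + (n-1) * (Real.exp (-a * t) * t⁻¹ ^ n)) with hG'
    have hG'int : IntegrableOn (fun t => -G' t) (Ioi 1) := by
      have := ((egen_integrable ha (n-1)).const_mul a).add ((egen_integrable ha n).const_mul ((n:ℝ)-1))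
      simp only [hG', neg_neg]; exact this
    have hderiv : ∀ x ∈ Ici (1:ℝ), HasDerivAt G (G' x) x := by
      intro x hx
      have hx1 : (1:ℝ) ≤ x := hx
      have hx0 : x ≠ 0 := by intro h; rw [h] at hx1; linarith
      have h1 : HasDerivAt (fun t : ℝ => Real.exp (-a * t)) (-a * Real.exp (-a * x)) x := by
        have h0 : HasDerivAt (fun t : ℝ => -a * t) (-a) x := by
          simpa using (hasDerivAt_id x).const_mul (-a)
        simpa [mul_comm] using h0.exp
      have h2 : HasDerivAt (fun t : ℝ => t⁻¹ ^ (n-1))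
          (((n:ℝ)-1) * x⁻¹ ^ (n-1-1) * (-(x^2)⁻¹)) x := by
        have hi : HasDerivAt (fun t : ℝ => t⁻¹) (-(x^2)⁻¹) x := hasDerivAt_inv hx0
        have this : HasDerivAt (fun t : ℝ => t⁻¹ ^ (n-1)) _ x := hi.pow (n-1)
        convert this using 1
        have : ((n-1 : ℕ) : ℝ) = (n:ℝ) - 1 := by
          have : 1 ≤ n := hn
          push_cast [this]; ring
        rw [this]
      have this : HasDerivAt (fun t => Real.exp (-a * t) * t⁻¹ ^ (n-1)) _ x := h1.mul h2
      convert this using 1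
      simp only [hG']
      have key : ((n:ℝ)-1) * (x⁻¹ ^ (n-1-1) * (x^2)⁻¹) = ((n:ℝ)-1) * x⁻¹ ^ n := by
        rcases Nat.lt_or_ge n 2 with h | h
        · have : n = 1 := by omega
          subst this; simp
        · congr 1
          rw [← inv_pow, ← pow_add]
          congr 1
          omega
      linear_combination Real.exp (-a*x) * key
    have hGint' : IntegrableOn G' (Ioi 1) := by
      have h := hG'int.neg
      have he : (-fun t => -G' t) = G' := by funext t; simp
      rwa [he] at h
    have htd : Tendsto G atTop (nhds 0) := by
      apply squeeze_zero' (g := fun t => Real.exp (-a * t))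
      · filter_upwards [eventually_ge_atTop (1:ℝ)] with t ht
        positivity
      · filter_upwards [eventually_ge_atTop (1:ℝ)] with t ht
        rw [hG]
        have hinv : t⁻¹ ≤ 1 := by rw [inv_le_one_iff₀]; right; linarith
        have : t⁻¹ ^ (n-1) ≤ 1 := pow_le_one₀ (by positivity) hinv
        nlinarith [Real.exp_pos (-a * t)]
      · apply Real.tendsto_exp_atBot.comp
        apply Tendsto.const_mul_atTop_of_neg (by linarith : -a < 0) tendsto_id
    have hfund : ∫ x in Ioi (1:ℝ), G' x = 0 - G 1 :=
      integral_Ioi_of_hasDerivAt_of_tendsto' hderiv hGint' htd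
    have hptle : ∀ t ∈ Ioi (1:ℝ),
        (a + n - 1) * (Real.exp (-a * t) * t⁻¹ ^ n) ≤ -G' t := by
      intro t ht
      have ht1 : (1:ℝ) < t := ht
      have hinv0 : (0:ℝ) ≤ t⁻¹ := by positivity
      have hinv : t⁻¹ ≤ 1 := by rw [inv_le_one_iff₀]; right; linarith
      have hpq : t⁻¹ ^ n ≤ t⁻¹ ^ (n-1) :=
        pow_le_pow_of_le_one hinv0 hinv (by omega)
      simp only [hG', neg_neg]
      have hE := (Real.exp_pos (-a * t)).le
      nlinarith [mul_le_mul_of_nonneg_left hpq (mul_nonneg ha.le hE)]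
    have hmono : (a + n - 1) * Egen n a ≤ Real.exp (-a) := by
      have h1 : (a + n - 1) * Egen n a
          = ∫ t in Ioi (1:ℝ), (a + n - 1) * (Real.exp (-a * t) * t⁻¹ ^ n) := by
        rw [Egen, ← integral_const_mul]
      rw [h1]
      have h2 : ∫ t in Ioi (1:ℝ), (a + n - 1) * (Real.exp (-a * t) * t⁻¹ ^ n)
          ≤ ∫ t in Ioi (1:ℝ), -G' t := by
        apply setIntegral_mono_on (hIn.const_mul _) hG'int measurableSet_Ioi hptle
      have h3 : ∫ t in Ioi (1:ℝ), -G' t = Real.exp (-a) := by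
        rw [integral_neg, hfund, hG]
        norm_num
      linarith
    have hexp1 : Real.exp a * Real.exp (-a) = 1 := by
      rw [← Real.exp_add]; simp
    have := mul_le_mul_of_nonneg_left hmono (Real.exp_pos a).le
    rw [inv_eq_one_div, le_div_iff₀ han1]
    nlinarith [this]
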